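/- Define G : (0,∞) → ℝ by G(ϰ) = 2ϰ⁴/√(ϰ⁴+4) − 4ϰ² + (ϰ²+3)² − (ϰ²+3)(√(ϰ⁴+4) + 1). Then there exists a unique ϰ_c > 0 such that G(ϰ_c) = 0; moreover G(ϰ) < 0 for all 0 < ϰ < ϰ_c, G(ϰ) > 0 for all ϰ > ϰ_c, and 1.039 < ϰ_c < 1.041. -/

import Mathlib

/-- The function `G(ϰ) = 2ϰ⁴/√(ϰ⁴+4) − 4ϰ² + (ϰ²+3)² − (ϰ²+3)(√(ϰ⁴+4)+1)` (the value
`g̃''(1)` of the thermal Hugoniot branch) has a unique positive zero `ϰ_c`, with `G < 0` on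
`(0, ϰ_c)`, `G > 0` on `(ϰ_c, ∞)`, and `1.039 < ϰ_c < 1.041`. -/
theorem stmt_15 (G : ℝ → ℝ)
    (hG : ∀ ϰ : ℝ, G ϰ = 2 * ϰ ^ 4 / Real.sqrt (ϰ ^ 4 + 4) - 4 * ϰ ^ 2 + (ϰ ^ 2 + 3) ^ 2
      - (ϰ ^ 2 + 3) * (Real.sqrt (ϰ ^ 4 + 4) + 1)) :
    ∃ ϰc : ℝ, 0 < ϰc ∧ G ϰc = 0 ∧
      (∀ ϰ : ℝ, 0 < ϰ → ϰ < ϰc → G ϰ < 0) ∧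
      (∀ ϰ : ℝ, ϰc < ϰ → 0 < G ϰ) ∧
      (∀ ϰ' : ℝ, 0 < ϰ' → G ϰ' = 0 → ϰ' = ϰc) ∧
      1.039 < ϰc ∧ ϰc < 1.041 := by
  set Qf : ℝ → ℝ := fun x => 2*x^6 - 3*x^4 + 12*x^2 - 12 with hQf
  -- key sign identity: G ϰ * m = 4 ϰ² Qf ϰ for some m > 0
  have key : ∀ ϰ : ℝ, ∃ m : ℝ, 0 < m ∧ G ϰ * m = 4 * ϰ^2 * Qf ϰ := by
    intro ϰ
    have h4 : (0:ℝ) < ϰ^4 + 4 := by positivity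
    have hsp : 0 < Real.sqrt (ϰ^4+4) := Real.sqrt_pos.2 h4
    have hs : Real.sqrt (ϰ^4+4)^2 = ϰ^4 + 4 := Real.sq_sqrt h4.le
    set s := Real.sqrt (ϰ^4+4) with hsdef
    have hGs : G ϰ * s = s * (ϰ^4 + ϰ^2 + 6) - (ϰ^6 + ϰ^4 + 4*ϰ^2 + 12) := by
      rw [hG]
      field_simp
      linear_combination (-(ϰ^2+3) * s) * hs
    have hBpos : (0:ℝ) < ϰ^4 + ϰ^2 + 6 := by positivity
    have hPpos : (0:ℝ) < ϰ^6 + ϰ^4 + 4*ϰ^2 + 12 := by positivity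
    refine ⟨s * (s*(ϰ^4 + ϰ^2 + 6) + (ϰ^6 + ϰ^4 + 4*ϰ^2 + 12)), by positivity, ?_⟩
    calc G ϰ * (s*(s*(ϰ^4 + ϰ^2 + 6) + (ϰ^6 + ϰ^4 + 4*ϰ^2 + 12)))
        = (G ϰ * s) * (s*(ϰ^4 + ϰ^2 + 6) + (ϰ^6 + ϰ^4 + 4*ϰ^2 + 12)) := by ring
      _ = (s*(ϰ^4 + ϰ^2 + 6) - (ϰ^6 + ϰ^4 + 4*ϰ^2 + 12))
            * (s*(ϰ^4 + ϰ^2 + 6) + (ϰ^6 + ϰ^4 + 4*ϰ^2 + 12)) := by rw [hGs]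
      _ = 4*ϰ^2*Qf ϰ := by
            simp only [hQf]
            linear_combination (ϰ^4 + ϰ^2 + 6)^2 * hs
  have mono : StrictMonoOn Qf (Set.Ici (0:ℝ)) := by
    intro a ha b hb hab
    simp only [Set.mem_Ici] at ha hb
    simp only [hQf]
    have h1 : a^2 < b^2 := by nlinarith
    have h2 : 0 < 2*(a^4 + a^2*b^2 + b^4) - 3*(a^2+b^2) + 12 := by
      nlinarith [sq_nonneg (4*a^2-3), sq_nonneg (4*b^2-3), sq_nonneg (a*b)]
    nlinarith [mul_pos (sub_pos.2 h1) h2]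
  have hcont : ContinuousOn Qf (Set.Icc (1.039:ℝ) 1.041) := by
    apply Continuous.continuousOn; simp only [hQf]; continuity
  have hmem : (0:ℝ) ∈ Set.Ioo (Qf 1.039) (Qf 1.041) := by
    constructor <;> (simp only [hQf]; norm_num)
  obtain ⟨ϰc, hϰc, hQc⟩ := intermediate_value_Ioo (by norm_num : (1.039:ℝ) ≤ 1.041) hcont hmem
  obtain ⟨hc1, hc2⟩ := hϰc
  have hcpos : 0 < ϰc := by linarith [show (0:ℝ) < 1.039 by norm_num]
  have sign : ∀ ϰ : ℝ, 0 < ϰ → ((Qf ϰ < 0 → G ϰ < 0) ∧ (Qf ϰ = 0 → G ϰ = 0) ∧ (0 < Qf ϰ → 0 < G ϰ)) := by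
    intro ϰ hϰ
    obtain ⟨m, hm, hGm⟩ := key ϰ
    have h4 : (0:ℝ) < 4*ϰ^2 := by positivity
    refine ⟨fun h => ?_, fun h => ?_, fun h => ?_⟩
    · by_contra hc
      push_neg at hc
      nlinarith [mul_nonneg hc hm.le, mul_neg_of_pos_of_neg h4 h]
    · have : G ϰ * m = 0 := by rw [hGm, h]; ring
      exact (mul_eq_zero.1 this).resolve_right hm.ne'
    · by_contra hc
      push_neg at hc
      nlinarith [mul_nonpos_of_nonpos_of_nonneg hc hm.le, mul_pos h4 h]
  refine ⟨ϰc, hcpos, ((sign ϰc hcpos).2.1 hQc), fun ϰ h0 hlt => ?_, fun ϰ hgt => ?_, fun ϰ' h0' hG0 => ?_, hc1, hc2⟩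
  · have : Qf ϰ < Qf ϰc := mono h0.le (Set.mem_Ici.2 hcpos.le) hlt
    exact (sign ϰ h0).1 (by rw [hQc] at this; exact this)
  · have hϰpos : 0 < ϰ := hcpos.trans hgt
    have : Qf ϰc < Qf ϰ := mono hcpos.le (Set.mem_Ici.2 hϰpos.le) hgt
    exact (sign ϰ hϰpos).2.2 (by rw [hQc] at this; exact this)
  · obtain ⟨m, hm, hGm⟩ := key ϰ'
    have h0m : (4:ℝ) * ϰ'^2 * Qf ϰ' = 0 := by rw [← hGm, hG0]; ring
    have hQ' : Qf ϰ' = 0 := by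
      have h4 : (4:ℝ) * ϰ'^2 ≠ 0 := by positivity
      exact (mul_eq_zero.1 h0m).resolve_left h4
    exact mono.injOn (Set.mem_Ici.2 h0'.le) (Set.mem_Ici.2 hcpos.le) (hQ'.trans hQc.symm)
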